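/- Let k ∈ ℝ, let c ∈ (0, π/√k) if k > 0 (c > 0 otherwise), and let θ, θ' ∈ [0,π]. For τ > 0 let m(τ) and m'(τ) denote the third side length of the S²_k-triangle with sides c, τ and included angle θ, θ' respectively. If m(τ) ≤ m'(τ) + o(τ) as τ → 0⁺, then θ ≤ θ'. -/

import Mathlib

open Filter Set

/-- Inverse hyperbolic cosine. -/
noncomputable def arcosh (x : ℝ) : ℝ := Real.log (x + Real.sqrt (x ^ 2 - 1))

/-- The third side of the triangle in `S²_k` with sides `c`, `τ` and included angle `θ`,
given by the law of cosines of the model space. -/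
noncomputable def sideLen (k c θ τ : ℝ) : ℝ :=
  if 0 < k then
    (1 / Real.sqrt k) * Real.arccos (Real.cos (Real.sqrt k * c) * Real.cos (Real.sqrt k * τ)
      + Real.sin (Real.sqrt k * c) * Real.sin (Real.sqrt k * τ) * Real.cos θ)
  else if k = 0 then Real.sqrt (c ^ 2 + τ ^ 2 - 2 * c * τ * Real.cos θ)
  else
    (1 / Real.sqrt (-k)) * arcosh (Real.cosh (Real.sqrt (-k) * c) * Real.cosh (Real.sqrt (-k) * τ)
      - Real.sinh (Real.sqrt (-k) * c) * Real.sinh (Real.sqrt (-k) * τ) * Real.cos θ)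

lemma hasDerivAt_arcosh {x : ℝ} (hx : 1 < x) :
    HasDerivAt arcosh (1 / Real.sqrt (x ^ 2 - 1)) x := by
  have h1 : (0:ℝ) < x ^ 2 - 1 := by nlinarith
  have hr : 0 < Real.sqrt (x ^ 2 - 1) := Real.sqrt_pos.2 h1
  have hsq : HasDerivAt (fun y : ℝ => Real.sqrt (y ^ 2 - 1)) (x / Real.sqrt (x ^ 2 - 1)) x := by
    have hin : HasDerivAt (fun y : ℝ => y ^ 2 - 1) (2 * x) x := by
      simpa using ((hasDerivAt_pow 2 x).sub_const 1)
    have := (Real.hasDerivAt_sqrt (ne_of_gt h1)).comp x hin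
    refine this.congr_deriv ?_
    field_simp
  have hu : HasDerivAt (fun y : ℝ => y + Real.sqrt (y ^ 2 - 1))
      (1 + x / Real.sqrt (x ^ 2 - 1)) x := (hasDerivAt_id x).add hsq
  have hpos : 0 < x + Real.sqrt (x ^ 2 - 1) := by positivity
  have := (Real.hasDerivAt_log (ne_of_gt hpos)).comp x hu
  refine this.congr_deriv ?_
  field_simp; ring

lemma sideLen_deriv (k c θ : ℝ) (hc : 0 < c) (hcπ : 0 < k → c < Real.pi / Real.sqrt k) :
    HasDerivAt (sideLen k c θ) (-Real.cos θ) 0 ∧ sideLen k c θ 0 = c := by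
  rcases lt_trichotomy k 0 with hk | hk | hk
  · -- k < 0
    set s := Real.sqrt (-k) with hs
    have hs0 : 0 < s := Real.sqrt_pos.2 (by linarith)
    have hfun : sideLen k c θ = fun τ =>
        (1 / s) * arcosh (Real.cosh (s * c) * Real.cosh (s * τ)
          - Real.sinh (s * c) * Real.sinh (s * τ) * Real.cos θ) := by
      funext τ
      simp [sideLen, not_lt.2 hk.le, hk.ne, hs]
    have hsc : 0 < s * c := by positivity
    have hsinh : 0 < Real.sinh (s * c) := Real.sinh_pos_iff.2 hsc
    have hcosh1 : 1 < Real.cosh (s * c) := Real.one_lt_cosh.2 (ne_of_gt hsc)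
    have hg : HasDerivAt (fun τ : ℝ => Real.cosh (s * c) * Real.cosh (s * τ)
        - Real.sinh (s * c) * Real.sinh (s * τ) * Real.cos θ)
        (-(s * Real.sinh (s * c) * Real.cos θ)) 0 := by
      have hlin : HasDerivAt (fun τ : ℝ => s * τ) s 0 := by
        simpa using (hasDerivAt_id (0:ℝ)).const_mul s
      have hch : HasDerivAt (fun τ : ℝ => Real.cosh (s * τ)) (Real.sinh (s * 0) * s) 0 :=
        (Real.hasDerivAt_cosh (s * 0)).comp 0 hlin
      have hsh : HasDerivAt (fun τ : ℝ => Real.sinh (s * τ)) (Real.cosh (s * 0) * s) 0 :=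
        (Real.hasDerivAt_sinh (s * 0)).comp 0 hlin
      have H := ((hch.const_mul (Real.cosh (s * c))).sub
        ((hsh.const_mul (Real.sinh (s * c))).mul_const (Real.cos θ)))
      simp only [mul_zero, Real.sinh_zero, Real.cosh_zero] at H
      refine H.congr_deriv ?_
      ring
    have hval : Real.cosh (s * c) * Real.cosh (s * 0)
        - Real.sinh (s * c) * Real.sinh (s * 0) * Real.cos θ = Real.cosh (s * c) := by simp
    have h2 : HasDerivAt arcosh (1 / Real.sqrt (Real.cosh (s * c) ^ 2 - 1))
        (Real.cosh (s * c) * Real.cosh (s * 0)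
          - Real.sinh (s * c) * Real.sinh (s * 0) * Real.cos θ) := by
      rw [hval]; exact hasDerivAt_arcosh hcosh1
    have harc := h2.comp 0 hg
    have hsqrt : Real.sqrt (Real.cosh (s * c) ^ 2 - 1) = Real.sinh (s * c) := by
      rw [show Real.cosh (s * c) ^ 2 - 1 = Real.sinh (s * c) ^ 2 by
        have := Real.cosh_sq (s * c); linarith]
      exact Real.sqrt_sq hsinh.le
    constructor
    · rw [hfun]
      have := harc.const_mul (1 / s)
      simp only [Function.comp] at this
      refine this.congr_deriv ?_
      rw [hsqrt]
      field_simp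
    · rw [hfun]
      simp only [hval]
      have harcv : arcosh (Real.cosh (s * c)) = s * c := by
        unfold arcosh
        rw [hsqrt, Real.cosh_add_sinh, Real.log_exp]
      rw [harcv]
      field_simp
  · -- k = 0
    subst hk
    have hfun : sideLen 0 c θ = fun τ =>
        Real.sqrt (c ^ 2 + τ ^ 2 - 2 * c * τ * Real.cos θ) := by
      funext τ; simp [sideLen]
    have hg : HasDerivAt (fun τ : ℝ => c ^ 2 + τ ^ 2 - 2 * c * τ * Real.cos θ)
        (-(2 * c * Real.cos θ)) 0 := by
      have h1 : HasDerivAt (fun τ : ℝ => τ ^ 2) ((2:ℕ) * (0:ℝ) ^ 1) 0 := hasDerivAt_pow 2 (0:ℝ)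
      have h2 : HasDerivAt (fun τ : ℝ => 2 * c * τ * Real.cos θ) (2 * c * Real.cos θ) 0 := by
        have := ((hasDerivAt_id (0:ℝ)).const_mul (2 * c)).mul_const (Real.cos θ)
        refine this.congr_deriv ?_; ring
      have H := ((h1.const_add (c ^ 2)).sub h2)
      refine H.congr_deriv ?_
      push_cast; ring
    have hval : c ^ 2 + (0:ℝ) ^ 2 - 2 * c * 0 * Real.cos θ = c ^ 2 := by ring
    have hcsq : (0:ℝ) < c ^ 2 := by positivity
    have h2 : HasDerivAt (fun y : ℝ => Real.sqrt y) (1 / (2 * Real.sqrt (c ^ 2)))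
        (c ^ 2 + (0:ℝ) ^ 2 - 2 * c * 0 * Real.cos θ) := by
      rw [hval]; exact Real.hasDerivAt_sqrt (ne_of_gt hcsq)
    have hcomp := h2.comp 0 hg
    constructor
    · rw [hfun]
      refine hcomp.congr_deriv ?_
      rw [Real.sqrt_sq hc.le]
      field_simp
    · rw [hfun]; simp [hval, Real.sqrt_sq hc.le]
  · -- k > 0
    set s := Real.sqrt k with hs
    have hs0 : 0 < s := Real.sqrt_pos.2 hk
    have hfun : sideLen k c θ = fun τ =>
        (1 / s) * Real.arccos (Real.cos (s * c) * Real.cos (s * τ)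
          + Real.sin (s * c) * Real.sin (s * τ) * Real.cos θ) := by
      funext τ; simp [sideLen, hk, hs]
    have hsc0 : 0 < s * c := by positivity
    have hscπ : s * c < Real.pi := by
      have := hcπ hk
      rw [lt_div_iff₀ hs0] at this
      linarith
    have hsin : 0 < Real.sin (s * c) := Real.sin_pos_of_pos_of_lt_pi hsc0 hscπ
    have hcos_lt : Real.cos (s * c) ^ 2 < 1 := by
      nlinarith [Real.sin_sq_add_cos_sq (s * c)]
    have habs : |Real.cos (s * c)| < 1 := (sq_lt_one_iff_abs_lt_one _).1 hcos_lt
    have hne1 : Real.cos (s * c) ≠ 1 := by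
      have := (abs_lt.1 habs).2; linarith
    have hne1' : Real.cos (s * c) ≠ -1 := by
      have := (abs_lt.1 habs).1; linarith
    have hg : HasDerivAt (fun τ : ℝ => Real.cos (s * c) * Real.cos (s * τ)
        + Real.sin (s * c) * Real.sin (s * τ) * Real.cos θ)
        (s * Real.sin (s * c) * Real.cos θ) 0 := by
      have hlin : HasDerivAt (fun τ : ℝ => s * τ) s 0 := by
        simpa using (hasDerivAt_id (0:ℝ)).const_mul s
      have hco : HasDerivAt (fun τ : ℝ => Real.cos (s * τ)) (-Real.sin (s * 0) * s) 0 :=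
        (Real.hasDerivAt_cos (s * 0)).comp 0 hlin
      have hsi : HasDerivAt (fun τ : ℝ => Real.sin (s * τ)) (Real.cos (s * 0) * s) 0 :=
        (Real.hasDerivAt_sin (s * 0)).comp 0 hlin
      have H := ((hco.const_mul (Real.cos (s * c))).add
        ((hsi.const_mul (Real.sin (s * c))).mul_const (Real.cos θ)))
      simp only [mul_zero, Real.sin_zero, Real.cos_zero] at H
      refine H.congr_deriv ?_
      ring
    have hval : Real.cos (s * c) * Real.cos (s * 0)
        + Real.sin (s * c) * Real.sin (s * 0) * Real.cos θ = Real.cos (s * c) := by simp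
    have h2 : HasDerivAt Real.arccos (-(1 / Real.sqrt (1 - Real.cos (s * c) ^ 2)))
        (Real.cos (s * c) * Real.cos (s * 0)
          + Real.sin (s * c) * Real.sin (s * 0) * Real.cos θ) := by
      rw [hval]; exact Real.hasDerivAt_arccos hne1' hne1
    have harc := h2.comp 0 hg
    have hsqrt : Real.sqrt (1 - Real.cos (s * c) ^ 2) = Real.sin (s * c) := by
      rw [show 1 - Real.cos (s * c) ^ 2 = Real.sin (s * c) ^ 2 by
        nlinarith [Real.sin_sq_add_cos_sq (s * c)]]
      exact Real.sqrt_sq hsin.le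
    constructor
    · rw [hfun]
      have := harc.const_mul (1 / s)
      simp only [Function.comp] at this
      refine this.congr_deriv ?_
      rw [hsqrt]
      field_simp
    · rw [hfun]
      simp only [hval]
      rw [Real.arccos_cos hsc0.le hscπ.le]
      field_simp

/-- If `m(τ) ≤ m'(τ) + o(τ)` as `τ → 0⁺` (i.e. `limsup (m(τ)−m'(τ))/τ ≤ 0`), then `θ ≤ θ'`. -/
theorem angle_mono_of_sideLen_le (k c θ θ' : ℝ) (hc : 0 < c)
    (hcπ : 0 < k → c < Real.pi / Real.sqrt k)
    (hθ : θ ∈ Set.Icc 0 Real.pi) (hθ' : θ' ∈ Set.Icc 0 Real.pi)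
    (h : Filter.limsup
        (fun τ => (((sideLen k c θ τ - sideLen k c θ' τ) / τ : ℝ) : EReal))
        (nhdsWithin 0 (Set.Ioi 0)) ≤ (0 : EReal)) :
    θ ≤ θ' := by
  obtain ⟨hd, hv⟩ := sideLen_deriv k c θ hc hcπ
  obtain ⟨hd', hv'⟩ := sideLen_deriv k c θ' hc hcπ
  have hsub : Ioi (0:ℝ) ⊆ {(0:ℝ)}ᶜ := fun x hx => ne_of_gt hx
  have hmono := nhdsWithin_mono (0:ℝ) hsub
  have ht1 : Tendsto (fun τ => (sideLen k c θ τ - c) / τ) (nhdsWithin 0 (Ioi 0))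
      (nhds (-Real.cos θ)) := by
    have := (hasDerivAt_iff_tendsto_slope.1 hd).mono_left hmono
    refine this.congr fun τ => ?_
    simp [slope, hv, div_eq_inv_mul]
  have ht2 : Tendsto (fun τ => (sideLen k c θ' τ - c) / τ) (nhdsWithin 0 (Ioi 0))
      (nhds (-Real.cos θ')) := by
    have := (hasDerivAt_iff_tendsto_slope.1 hd').mono_left hmono
    refine this.congr fun τ => ?_
    simp [slope, hv', div_eq_inv_mul]
  have ht : Tendsto (fun τ => (sideLen k c θ τ - sideLen k c θ' τ) / τ)
      (nhdsWithin 0 (Ioi 0)) (nhds (Real.cos θ' - Real.cos θ)) := by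
    have := ht1.sub ht2
    rw [show -Real.cos θ - -Real.cos θ' = Real.cos θ' - Real.cos θ by ring] at this
    refine this.congr fun τ => ?_
    ring
  have hte : Tendsto (fun τ => (((sideLen k c θ τ - sideLen k c θ' τ) / τ : ℝ) : EReal))
      (nhdsWithin 0 (Ioi 0)) (nhds ((Real.cos θ' - Real.cos θ : ℝ) : EReal)) :=
    EReal.tendsto_coe.2 ht
  have hlim := hte.limsup_eq
  rw [hlim] at h
  have hre : Real.cos θ' - Real.cos θ ≤ 0 := by
    exact_mod_cast h
  by_contra hlt
  push_neg at hlt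
  have := Real.strictAntiOn_cos hθ' hθ hlt
  linarith
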